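/- For every positive integer n, the sign of g⁻¹(n) equals the Liouville function λ(n); equivalently, (−1)^{Ω(n)} · g⁻¹(n) > 0 for all n ≥ 1. -/

import Mathlib

open ArithmeticFunction Finset
open scoped ArithmeticFunction.Omega ArithmeticFunction.omega ArithmeticFunction.zeta

noncomputable section Stmt5Aux

/-- Indicator of the primes, as a real arithmetic function. -/
def stmt5chi : ArithmeticFunction ℝ :=
  ⟨fun n => if n.Prime then 1 else 0, by simp [Nat.not_prime_zero]⟩

lemma stmt5chi_apply (n : ℕ) : stmt5chi n = if n.Prime then 1 else 0 := rfl

def stmt5h : ArithmeticFunction ℝ := 1 + stmt5chi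

lemma stmt5h_apply (n : ℕ) :
    stmt5h n = (if n = 1 then (1 : ℝ) else 0) + (if n.Prime then 1 else 0) := by
  simp [stmt5h, stmt5chi_apply, ArithmeticFunction.one_apply]

/-- `T n = (-1)^{Ω n} ·` (number of ordered prime factorizations of `n`), defined by
its recursion `T n = -∑_{p ∣ n} T (n / p)`. -/
def stmt5T : ℕ → ℝ
  | 0 => 0
  | 1 => 1
  | (n + 2) => -∑ p ∈ (n + 2).primeFactors.attach, stmt5T ((n + 2) / p.1)
decreasing_by
  exact Nat.div_lt_self (Nat.succ_pos _) (Nat.Prime.one_lt (Nat.prime_of_mem_primeFactors p.2))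

lemma stmt5T_zero : stmt5T 0 = 0 := by simp [stmt5T]

lemma stmt5T_one : stmt5T 1 = 1 := by simp [stmt5T]

/-- `T` as an arithmetic function. -/
def stmt5Tf : ArithmeticFunction ℝ := ⟨stmt5T, stmt5T_zero⟩

lemma stmt5Tf_apply (n : ℕ) : stmt5Tf n = stmt5T n := rfl

lemma stmt5T_rec {n : ℕ} (hn : 2 ≤ n) :
    stmt5T n = -∑ p ∈ n.primeFactors, stmt5T (n / p) := by
  obtain ⟨m, rfl⟩ : ∃ m, n = m + 2 := ⟨n - 2, by omega⟩
  rw [stmt5T, ← Finset.sum_attach ((m + 2).primeFactors) (fun p => stmt5T ((m + 2) / p))]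

lemma stmt5_omega_succ {n : ℕ} {p : ℕ} (hp : p ∈ n.primeFactors) :
    Ω n = Ω (n / p) + 1 := by
  obtain ⟨hpp, hpd, hn0⟩ := Nat.mem_primeFactors.mp hp
  have hdp : n / p ≠ 0 := by
    have := Nat.le_of_dvd (Nat.pos_of_ne_zero hn0) hpd
    exact Nat.div_ne_zero_iff.mpr ⟨hpp.ne_zero, this⟩
  conv_lhs => rw [← Nat.mul_div_cancel' hpd]
  rw [ArithmeticFunction.cardFactors_mul hpp.ne_zero hdp,
    ArithmeticFunction.cardFactors_apply_prime hpp, add_comm]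

lemma stmt5T_sign : ∀ n : ℕ, 0 < n → 0 < (-1 : ℝ) ^ (Ω n) * stmt5T n := by
  intro n
  induction n using Nat.strong_induction_on with
  | _ n ih =>
    intro hn
    rcases eq_or_lt_of_le (show 1 ≤ n from hn) with h1 | h2
    · rw [← h1]; simp [stmt5T_one]
    have key : (-1 : ℝ) ^ (Ω n) * stmt5T n
        = ∑ p ∈ n.primeFactors, (-1 : ℝ) ^ (Ω (n / p)) * stmt5T (n / p) := by
      rw [stmt5T_rec h2, mul_neg, Finset.mul_sum, ← Finset.sum_neg_distrib]
      refine Finset.sum_congr rfl fun p hp => ?_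
      rw [stmt5_omega_succ hp, pow_succ]
      ring
    rw [key]
    refine Finset.sum_pos (fun p hp => ?_) (Nat.nonempty_primeFactors.mpr h2)
    obtain ⟨hpp, hpd, hn0⟩ := Nat.mem_primeFactors.mp hp
    have h1 : n / p < n := Nat.div_lt_self hn hpp.one_lt
    have h0 : 0 < n / p := Nat.div_pos (Nat.le_of_dvd hn hpd) hpp.pos
    exact ih _ h1 h0

lemma stmt5_hT : stmt5h * stmt5Tf = 1 := by
  ext n
  rcases Nat.eq_zero_or_pos n with rfl | hn
  · simp
  rw [ArithmeticFunction.mul_apply,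
    Nat.sum_divisorsAntidiagonal (fun x y => stmt5h x * stmt5Tf y)]
  have expand : ∀ d ∈ n.divisors, stmt5h d * stmt5Tf (n / d)
      = (if d = 1 then stmt5T (n / d) else 0) + (if d.Prime then stmt5T (n / d) else 0) := by
    intro d _
    rw [stmt5h_apply, stmt5Tf_apply]
    by_cases h1 : d = 1 <;> by_cases h2 : d.Prime <;> simp [h1, h2, Nat.not_prime_one]
  rw [Finset.sum_congr rfl expand, Finset.sum_add_distrib]
  have first : ∑ d ∈ n.divisors, (if d = 1 then stmt5T (n / d) else 0) = stmt5T n := by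
    rw [Finset.sum_ite_eq' n.divisors 1 (fun d => stmt5T (n / d)),
      if_pos (Nat.one_mem_divisors.mpr hn.ne'), Nat.div_one]
  have second : ∑ d ∈ n.divisors, (if d.Prime then stmt5T (n / d) else 0)
      = ∑ p ∈ n.primeFactors, stmt5T (n / p) := by
    rw [Nat.primeFactors_eq_to_filter_divisors_prime, Finset.sum_filter]
  rw [first, second]
  rcases eq_or_lt_of_le (show 1 ≤ n from hn) with h1 | h2
  · rw [← h1]
    simp [stmt5T_one, ArithmeticFunction.one_apply]
  · rw [stmt5T_rec h2, ArithmeticFunction.one_apply_ne (by omega : n ≠ 1)]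
    ring

lemma stmt5_sum_h (n : ℕ) (hn : 0 < n) :
    ∑ d ∈ n.divisors, stmt5h d = (ω n : ℝ) + 1 := by
  have expand : ∀ d ∈ n.divisors, stmt5h d
      = (if d = 1 then (1 : ℝ) else 0) + (if d.Prime then 1 else 0) :=
    fun d _ => stmt5h_apply d
  rw [Finset.sum_congr rfl expand, Finset.sum_add_distrib,
    Finset.sum_ite_eq' n.divisors 1 (fun _ => (1 : ℝ)), if_pos (Nat.one_mem_divisors.mpr hn.ne')]
  have second : ∑ d ∈ n.divisors, (if d.Prime then (1 : ℝ) else 0)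
      = (n.primeFactors.card : ℝ) := by
    rw [Nat.primeFactors_eq_to_filter_divisors_prime, Finset.sum_boole]
  have card_eq : ω n = n.primeFactors.card := by
    rw [ArithmeticFunction.cardDistinctFactors_apply, Nat.primeFactors,
      List.card_toFinset]
  rw [second, card_eq, add_comm]

end Stmt5Aux

/-- Let `g` be the arithmetic function with `g(n) = ω(n) + 1` for `n ≥ 1`
and let `ginv` be its Dirichlet inverse (characterized by `g * ginv = 1`).  Then the sign
of `ginv(n)` equals the Liouville function `λ(n) = (−1)^{Ω(n)}`; equivalently
`(−1)^{Ω(n)} · ginv(n) > 0` for all `n ≥ 1`. -/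
theorem stmt_5 (g ginv : ArithmeticFunction ℝ)
    (hg : ∀ n : ℕ, 0 < n → g n = (ArithmeticFunction.cardDistinctFactors n : ℝ) + 1)
    (hginv : g * ginv = 1) :
    ∀ n : ℕ, 0 < n → 0 < (-1 : ℝ) ^ (ArithmeticFunction.cardFactors n) * ginv n := by
  -- `g = ζ * h`
  have hgzh : g = (↑(ζ : ArithmeticFunction ℕ) : ArithmeticFunction ℝ) * stmt5h := by
    ext n
    rcases Nat.eq_zero_or_pos n with rfl | hn
    · simp
    rw [ArithmeticFunction.coe_zeta_mul_apply, stmt5_sum_h n hn, hg n hn]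
  -- `F = μ * T` is an inverse of `g`
  set F : ArithmeticFunction ℝ :=
    (↑(ArithmeticFunction.moebius) : ArithmeticFunction ℝ) * stmt5Tf with hF
  have hgF : g * F = 1 := by
    rw [hgzh, hF]
    have : (↑(ζ : ArithmeticFunction ℕ) : ArithmeticFunction ℝ) * stmt5h *
        ((↑(ArithmeticFunction.moebius) : ArithmeticFunction ℝ) * stmt5Tf)
        = ((↑(ζ : ArithmeticFunction ℕ) : ArithmeticFunction ℝ) *
            (↑(ArithmeticFunction.moebius) : ArithmeticFunction ℝ)) *
          (stmt5h * stmt5Tf) := by ring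
    rw [this, ArithmeticFunction.coe_zeta_mul_coe_moebius, stmt5_hT, mul_one]
  -- hence `ginv = F`
  have hginvF : ginv = F := by
    calc ginv = 1 * ginv := (one_mul _).symm
    _ = (F * g) * ginv := by rw [mul_comm F g, hgF]
    _ = F * (g * ginv) := mul_assoc _ _ _
    _ = F := by rw [hginv, mul_one]
  intro n hn
  rw [hginvF, hF, ArithmeticFunction.mul_apply,
    Nat.sum_divisorsAntidiagonal
      (fun x y => (↑(ArithmeticFunction.moebius) : ArithmeticFunction ℝ) x * stmt5Tf y),
    Finset.mul_sum]
  refine Finset.sum_pos' (fun d hd => ?_) ⟨1, Nat.one_mem_divisors.mpr hn.ne', ?_⟩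
  · obtain ⟨hdn, hn0⟩ := Nat.mem_divisors.mp hd
    have hd0 : d ≠ 0 := fun h => hn0 (by simpa [h] using hdn)
    have he0 : 0 < n / d := Nat.div_pos (Nat.le_of_dvd hn hdn) (Nat.pos_of_ne_zero hd0)
    by_cases hsq : Squarefree d
    · have hmu : (ArithmeticFunction.moebius d : ℤ) = (-1) ^ (Ω d) :=
        ArithmeticFunction.moebius_apply_of_squarefree hsq
      have hsplit : Ω n = Ω d + Ω (n / d) := by
        conv_lhs => rw [← Nat.mul_div_cancel' hdn]
        exact ArithmeticFunction.cardFactors_mul hd0 he0.ne'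
      have hcast : ((↑(ArithmeticFunction.moebius) : ArithmeticFunction ℝ)) d
          = (-1 : ℝ) ^ (Ω d) := by
        rw [ArithmeticFunction.intCoe_apply, hmu]; push_cast; ring
      rw [hcast, stmt5Tf_apply, hsplit]
      have : (-1 : ℝ) ^ (Ω d + Ω (n / d)) * ((-1 : ℝ) ^ (Ω d) * stmt5T (n / d))
          = ((-1 : ℝ) ^ (Ω d) * (-1 : ℝ) ^ (Ω d)) * ((-1 : ℝ) ^ (Ω (n / d)) * stmt5T (n / d)) := by
        rw [pow_add]; ring
      rw [this, ← pow_add, Even.neg_one_pow ⟨Ω d, rfl⟩, one_mul]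
      exact le_of_lt (stmt5T_sign _ he0)
    · rw [ArithmeticFunction.intCoe_apply,
        ArithmeticFunction.moebius_eq_zero_of_not_squarefree hsq]
      simp
  · rw [ArithmeticFunction.intCoe_apply, ArithmeticFunction.moebius_apply_one]
    simpa [stmt5Tf_apply] using stmt5T_sign n hn
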